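/- The bracket set map is a bijection from binary trees on n nodes (with in-order labeling) to the family of subsets B of pairs such that each component B_i = {j : (i,j) ∈ B} is either empty or an interval {i+1, i+2, …, i+l} for some l > 0, and if j ∈ B_i then B_j ⊆ B_i. -/

import Mathlib

/-- Binary trees: each internal node has exactly a left and a right subtree. -/
inductive BTree : Type
  | leaf : BTree
  | node : BTree → BTree → BTree

namespace BTree

/-- Number of (internal) nodes of a binary tree. -/
def size : BTree → ℕ
  | leaf => 0
  | node l r => size l + size r + 1

/-- The bracket set of a binary tree whose nodes are labeled in in-order by
`o+1, …, o+size T`: pairs `(i,j)` such that node `j` lies in the right subtree of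
node `i`. -/
def bracket : BTree → ℕ → Set (ℕ × ℕ)
  | leaf, _ => ∅
  | node l r, o =>
      bracket l o ∪ bracket r (o + size l + 1) ∪
        {p | p.1 = o + size l + 1 ∧ o + size l + 1 < p.2 ∧ p.2 ≤ o + size l + 1 + size r}

end BTree

/-- The `i`-th component `B_i` of a set of pairs. -/
def comp (B : Set (ℕ × ℕ)) (i : ℕ) : Set ℕ := {j | (i, j) ∈ B}

namespace BTreeAux

open BTree

lemma comp_union (A B : Set (ℕ × ℕ)) (i : ℕ) : comp (A ∪ B) i = comp A i ∪ comp B i := rfl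

lemma mem_bracket_node {l r : BTree} {o : ℕ} {p : ℕ × ℕ} :
    p ∈ bracket (node l r) o ↔ p ∈ bracket l o ∨ p ∈ bracket r (o + size l + 1) ∨
      (p.1 = o + size l + 1 ∧ o + size l + 1 < p.2 ∧ p.2 ≤ o + size l + 1 + size r) := by
  simp only [bracket, Set.mem_union, Set.mem_setOf_eq]
  tauto

lemma bracket_bounds : ∀ (T : BTree) (o : ℕ) (p : ℕ × ℕ), p ∈ bracket T o →
    o + 1 ≤ p.1 ∧ p.1 < p.2 ∧ p.2 ≤ o + size T
  | leaf, _, _, h => h.elim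
  | node l r, o, p, h => by
    rcases mem_bracket_node.mp h with h | h | h
    · have := bracket_bounds l o p h
      simp only [size]; omega
    · have := bracket_bounds r (o + size l + 1) p h
      simp only [size]; omega
    · simp only [size]; omega

lemma comp_bracket_of_le {T : BTree} {o i : ℕ} (h : i ≤ o) : comp (bracket T o) i = ∅ := by
  ext j
  simp only [comp, Set.mem_setOf_eq, Set.mem_empty_iff_false, iff_false]
  intro hj
  have := bracket_bounds T o (i, j) hj
  simp at this; omega

/-- components of the bracket of the left subtree vanish for large indices -/
lemma comp_bracket_of_ge {T : BTree} {o i : ℕ} (h : o + size T ≤ i) :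
    comp (bracket T o) i = ∅ := by
  ext j
  simp only [comp, Set.mem_setOf_eq, Set.mem_empty_iff_false, iff_false]
  intro hj
  have := bracket_bounds T o (i, j) hj
  simp at this; omega

lemma comp_bracket_node (l r : BTree) (o i : ℕ) :
    comp (bracket (node l r) o) i =
      comp (bracket l o) i ∪ comp (bracket r (o + size l + 1)) i ∪
        (if i = o + size l + 1 then Set.Ioc (o + size l + 1) (o + size l + 1 + size r) else ∅) := by
  ext j
  simp only [comp, Set.mem_setOf_eq, Set.mem_union]
  rw [show ((i, j) ∈ bracket (node l r) o) ↔ _ from mem_bracket_node]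
  by_cases h : i = o + size l + 1 <;> simp [h, Set.mem_Ioc] <;> tauto

lemma comp_bracket (T : BTree) (o : ℕ) (i : ℕ) :
    comp (bracket T o) i = ∅ ∨ ∃ l > 0, comp (bracket T o) i = Set.Ioc i (i + l) := by
  induction T generalizing o with
  | leaf =>
    left
    ext j; simp [comp, bracket]
  | node l r ihl ihr =>
    set m := o + size l + 1 with hm
    rcases lt_trichotomy i m with hi | hi | hi
    · have h1 : comp (bracket r m) i = ∅ := comp_bracket_of_le (by omega)
      rw [comp_bracket_node, h1, if_neg (by omega)]
      simp only [Set.union_empty]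
      exact ihl o
    · have h1 : comp (bracket l o) i = ∅ := comp_bracket_of_ge (by omega)
      have h2 : comp (bracket r m) i = ∅ := comp_bracket_of_le (by omega)
      rw [comp_bracket_node, h1, h2, if_pos hi]
      simp only [Set.empty_union, Set.union_empty]
      rcases Nat.eq_zero_or_pos (size r) with h | h
      · left; rw [h]; simp
      · right; exact ⟨size r, h, by rw [hi]⟩
    · have h1 : comp (bracket l o) i = ∅ := comp_bracket_of_ge (by omega)
      rw [comp_bracket_node, h1, if_neg (by omega)]
      simp only [Set.empty_union, Set.union_empty]
      exact ihr m

lemma comp_bracket_subset (T : BTree) (o i : ℕ) :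
    comp (bracket T o) i ⊆ Set.Ioc i (o + size T) := by
  intro j hj
  have := bracket_bounds T o (i, j) hj
  simp at this ⊢; omega

lemma bracket_nested (T : BTree) (o : ℕ) : ∀ i j, (i, j) ∈ bracket T o →
    comp (bracket T o) j ⊆ comp (bracket T o) i := by
  induction T generalizing o with
  | leaf => intro i j h; exact h.elim
  | node l r ihl ihr =>
    intro i j hij
    set m := o + size l + 1 with hm
    rcases mem_bracket_node.mp hij with h | h | h
    · -- both in left subtree
      have hb := bracket_bounds l o (i, j) h
      simp only at hb
      have hci : comp (bracket (node l r) o) i = comp (bracket l o) i := by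
        rw [comp_bracket_node, comp_bracket_of_le (T := r) (by omega), if_neg (by omega)]
        simp
      have hcj : comp (bracket (node l r) o) j = comp (bracket l o) j := by
        rw [comp_bracket_node, comp_bracket_of_le (T := r) (by omega), if_neg (by omega)]
        simp
      rw [hci, hcj]
      exact ihl o i j h
    · -- both in right subtree
      have hb := bracket_bounds r m (i, j) h
      simp only at hb
      have hci : comp (bracket (node l r) o) i = comp (bracket r m) i := by
        rw [comp_bracket_node, comp_bracket_of_ge (T := l) (by omega), if_neg (by omega)]
        simp [hm]
      have hcj : comp (bracket (node l r) o) j = comp (bracket r m) j := by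
        rw [comp_bracket_node, comp_bracket_of_ge (T := l) (by omega), if_neg (by omega)]
        simp [hm]
      rw [hci, hcj]
      exact ihr m i j h
    · -- i is the root
      obtain ⟨h1, h2, h3⟩ := h
      have hci : comp (bracket (node l r) o) i =
          Set.Ioc m (m + size r) := by
        rw [comp_bracket_node, comp_bracket_of_ge (T := l) (by omega),
          comp_bracket_of_le (T := r) (by omega), if_pos h1]
        simp [h1, hm]
      have hcj : comp (bracket (node l r) o) j = comp (bracket r m) j := by
        rw [comp_bracket_node, comp_bracket_of_ge (T := l) (by omega), if_neg (by omega)]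
        simp [hm]
      rw [hci, hcj]
      intro k hk
      have := comp_bracket_subset r m j hk
      simp at this ⊢; omega

/-- no pair of the bracket set has the root label as second coordinate -/
lemma root_not_snd (l r : BTree) (o : ℕ) (p : ℕ × ℕ) (hp : p ∈ bracket (node l r) o) :
    p.2 ≠ o + size l + 1 := by
  rcases mem_bracket_node.mp hp with h | h | h
  · have := bracket_bounds l o p h; omega
  · have := bracket_bounds r (o + size l + 1) p h; omega
  · omega

lemma bracket_inj : ∀ (T T' : BTree) (o : ℕ), size T = size T' →
    bracket T o = bracket T' o → T = T' := by
  intro T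
  induction T with
  | leaf =>
    intro T' o hs _
    cases T' with
    | leaf => rfl
    | node l' r' => simp [size] at hs
  | node l r ihl ihr =>
    intro T' o hs hb
    cases T' with
    | leaf => simp [size] at hs
    | node l' r' =>
      -- roots coincide
      have hroot : size l = size l' := by
        by_contra hne
        rcases Nat.lt_or_ge (size l) (size l') with h | h
        · -- (o+size l+1, o+size l'+1) ∈ bracket T o but its snd is root of T'
          have hmem : ((o + size l + 1 : ℕ), (o + size l' + 1 : ℕ)) ∈
              bracket (node l r) o := by
            apply mem_bracket_node.mpr
            right; right
            simp only [size] at hs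
            refine ⟨rfl, ?_, ?_⟩ <;> simp only [] <;> omega
          rw [hb] at hmem
          exact root_not_snd l' r' o _ hmem rfl
        · have h' : size l' < size l := by omega
          have hmem : ((o + size l' + 1 : ℕ), (o + size l + 1 : ℕ)) ∈
              bracket (node l' r') o := by
            apply mem_bracket_node.mpr
            right; right
            simp only [size] at hs
            refine ⟨rfl, ?_, ?_⟩ <;> simp only [] <;> omega
          rw [← hb] at hmem
          exact root_not_snd l r o _ hmem rfl
      have hsr : size r = size r' := by simp only [size] at hs; omega
      set m := o + size l + 1 with hm
      have hL : bracket l o = bracket l' o := by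
        have key : ∀ (a b : BTree), size a = size l →
            bracket (node a b) o ∩ {p | p.2 ≤ o + size l} = bracket a o := by
          intro a b ha
          ext p
          simp only [Set.mem_inter_iff, Set.mem_setOf_eq]
          constructor
          · rintro ⟨hp, hp2⟩
            rcases mem_bracket_node.mp hp with h | h | h
            · exact h
            · have := bracket_bounds b (o + size a + 1) p h; omega
            · omega
          · intro hp
            have := bracket_bounds a o p hp
            exact ⟨mem_bracket_node.mpr (Or.inl hp), by omega⟩
        calc bracket l o = bracket (node l r) o ∩ {p | p.2 ≤ o + size l} :=
              (key l r rfl).symm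
          _ = bracket (node l' r') o ∩ {p | p.2 ≤ o + size l} := by rw [hb]
          _ = bracket l' o := key l' r' hroot.symm
      have hR : bracket r m = bracket r' m := by
        have key : ∀ (a b : BTree), size a = size l →
            bracket (node a b) o ∩ {p | m + 1 ≤ p.1} = bracket b m := by
          intro a b ha
          ext p
          simp only [Set.mem_inter_iff, Set.mem_setOf_eq]
          constructor
          · rintro ⟨hp, hp1⟩
            rcases mem_bracket_node.mp hp with h | h | h
            · have := bracket_bounds a o p h; omega
            · rw [ha] at h; exact h
            · omega
          · intro hp
            have := bracket_bounds b m p hp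
            refine ⟨mem_bracket_node.mpr (Or.inr (Or.inl ?_)), by omega⟩
            rw [ha]; exact hp
        calc bracket r m = bracket (node l r) o ∩ {p | m + 1 ≤ p.1} :=
              (key l r rfl).symm
          _ = bracket (node l' r') o ∩ {p | m + 1 ≤ p.1} := by rw [hb]
          _ = bracket r' m := key l' r' hroot.symm
      rw [ihl l' o hroot hL, ihr r' m hsr hR]

/-- Surjectivity: every valid bracket family comes from a tree. -/
lemma bracket_surj : ∀ (n o : ℕ) (B : Set (ℕ × ℕ)),
    (∀ p ∈ B, o + 1 ≤ p.1 ∧ p.1 < p.2 ∧ p.2 ≤ o + n) →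
    (∀ i : ℕ, comp B i = ∅ ∨ ∃ l > 0, comp B i = Set.Ioc i (i + l)) →
    (∀ i j : ℕ, (i, j) ∈ B → comp B j ⊆ comp B i) →
    ∃ T : BTree, size T = n ∧ bracket T o = B := by
  intro n
  induction n using Nat.strong_induction_on with
  | _ n ih =>
    intro o B hbd hcomp hnest
    rcases Nat.eq_zero_or_pos n with hn | hn
    · subst hn
      refine ⟨leaf, rfl, ?_⟩
      ext p
      simp only [bracket, Set.mem_empty_iff_false, false_iff]
      intro hp
      have := hbd p hp; omega
    · -- find the root m
      set N := o + n with hN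
      have hmex : ∃ m : ℕ, o + 1 ≤ m ∧ m ≤ N ∧
          ((m < N ∧ comp B m = Set.Ioc m N) ∨ (m = N ∧ comp B m = ∅)) ∧
          (∀ p ∈ B, p.1 < m → p.2 < m) := by
        by_cases hS : ∃ i, (i, N) ∈ B
        · set m := sInf {i : ℕ | (i, N) ∈ B} with hmdef
          have hmmem : (m, N) ∈ B := Nat.sInf_mem hS
          have hmbd := hbd _ hmmem
          simp only at hmbd
          have hcompm : comp B m = Set.Ioc m N := by
            rcases hcomp m with h | ⟨l, hl, h⟩
            · exfalso
              have : N ∈ comp B m := hmmem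
              rw [h] at this; exact this
            · have hNmem : N ∈ Set.Ioc m (m + l) := by rw [← h]; exact hmmem
              simp only [Set.mem_Ioc] at hNmem
              have hml : (m, m + l) ∈ B := by
                have : m + l ∈ comp B m := by rw [h]; simp; omega
                exact this
              have := hbd _ hml
              have : m + l = N := by omega
              rw [h, this]
          refine ⟨m, by omega, by omega, Or.inl ⟨by omega, hcompm⟩, ?_⟩
          intro p hp hp1
          by_contra hge
          push_neg at hge
          have hpbd := hbd p hp
          -- m ∈ comp B p.1
          have hc1 : p.2 ∈ comp B p.1 := hp
          rcases hcomp p.1 with h | ⟨l, hl, h⟩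
          · rw [h] at hc1; exact hc1
          · have hmc : m ∈ comp B p.1 := by
              rw [h] at hc1 ⊢
              simp only [Set.mem_Ioc] at hc1 ⊢
              omega
            have : comp B m ⊆ comp B p.1 := hnest p.1 m hmc
            have hNc : N ∈ comp B p.1 := this (by rw [hcompm]; simp; omega)
            have : p.1 < m := hp1
            exact Nat.notMem_of_lt_sInf (s := {i : ℕ | (i, N) ∈ B}) hp1 hNc
        · push_neg at hS
          refine ⟨N, by omega, le_refl _, Or.inr ⟨rfl, ?_⟩, ?_⟩
          · ext j
            simp only [comp, Set.mem_setOf_eq, Set.mem_empty_iff_false, iff_false]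
            intro hj
            have := hbd _ hj; simp at this; omega
          · intro p hp hp1
            by_contra hge
            push_neg at hge
            have hpbd := hbd p hp
            have hp2 : p.2 = N := by omega
            exact hS p.1 (by rw [← hp2]; exact hp)
      obtain ⟨m, hm1, hm2, hmroot, hkey⟩ := hmex
      -- left and right parts
      set BL : Set (ℕ × ℕ) := {p ∈ B | p.2 < m} with hBL
      set BR : Set (ℕ × ℕ) := {p ∈ B | m < p.1} with hBR
      have hcompL : ∀ i, i < m → comp BL i = comp B i := by
        intro i hi
        ext j
        simp only [comp, hBL, Set.mem_setOf_eq, Set.mem_sep_iff]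
        constructor
        · exact fun h => h.1
        · intro h; exact ⟨h, hkey _ h hi⟩
      have hcompL' : ∀ i, m ≤ i → comp BL i = ∅ := by
        intro i hi
        ext j
        simp only [comp, hBL, Set.mem_setOf_eq, Set.mem_sep_iff, Set.mem_empty_iff_false,
          iff_false]
        rintro ⟨h1, h2⟩
        have := hbd _ h1; omega
      have hcompR : ∀ i, m < i → comp BR i = comp B i := by
        intro i hi
        ext j
        simp only [comp, hBR, Set.mem_setOf_eq, Set.mem_sep_iff]
        exact ⟨fun h => h.1, fun h => ⟨h, hi⟩⟩
      have hcompR' : ∀ i, i ≤ m → comp BR i = ∅ := by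
        intro i hi
        ext j
        simp only [comp, hBR, Set.mem_setOf_eq, Set.mem_sep_iff, Set.mem_empty_iff_false,
          iff_false]
        rintro ⟨h1, h2⟩
        omega
      -- left tree
      obtain ⟨l, hls, hlb⟩ : ∃ T : BTree, size T = m - 1 - o ∧ bracket T o = BL := by
        apply ih (m - 1 - o) (by omega)
        · intro p hp
          obtain ⟨hp1, hp2⟩ := hp
          have := hbd p hp1
          omega
        · intro i
          rcases Nat.lt_or_ge i m with hi | hi
          · rw [hcompL i hi]; exact hcomp i
          · left; exact hcompL' i hi
        · intro i j hij k hk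
          obtain ⟨hij1, hij2⟩ := hij
          have hbd' := hbd _ hij1
          simp only at hbd'
          rw [hcompL j (by omega)] at hk
          rw [hcompL i (by omega)]
          exact hnest i j hij1 hk
      -- right tree
      obtain ⟨r, hrs, hrb⟩ : ∃ T : BTree, size T = N - m ∧ bracket T m = BR := by
        apply ih (N - m) (by omega)
        · intro p hp
          obtain ⟨hp1, hp2⟩ := hp
          have := hbd p hp1
          omega
        · intro i
          rcases Nat.lt_or_ge m i with hi | hi
          · rw [hcompR i hi]; exact hcomp i
          · left; exact hcompR' i hi
        · intro i j hij k hk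
          obtain ⟨hij1, hij2⟩ := hij
          have hbd' := hbd _ hij1
          simp only at hbd'
          rw [hcompR j (by omega)] at hk
          rw [hcompR i (by omega)]
          exact hnest i j hij1 hk
      refine ⟨node l r, ?_, ?_⟩
      · simp only [size]; omega
      · have hm' : o + size l + 1 = m := by omega
        ext p
        rw [mem_bracket_node, hm', hlb, hrb]
        constructor
        · rintro (h | h | h)
          · exact h.1
          · exact h.1
          · -- middle: p.1 = m, m < p.2 ≤ m + size r = N
            rcases hmroot with ⟨hlt, hcm⟩ | ⟨heq, hcm⟩
            · have : p.2 ∈ comp B m := by rw [hcm]; simp; omega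
              rw [← h.1] at this
              exact this
            · omega
        · intro hp
          rcases lt_trichotomy p.1 m with h | h | h
          · left; exact ⟨hp, hkey p hp h⟩
          · right; right
            have hp2 : p.2 ∈ comp B p.1 := hp
            rw [h] at hp2
            rcases hmroot with ⟨hlt, hcm⟩ | ⟨heq, hcm⟩
            · rw [hcm] at hp2
              simp only [Set.mem_Ioc] at hp2
              exact ⟨h, hp2.1, by omega⟩
            · rw [hcm] at hp2; exact hp2.elim
          · right; left; exact ⟨hp, h⟩

end BTreeAux

/-- The bracket set map is a bijection from in-order labeled binary trees on `n` nodes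
onto the sets `B` of pairs from `[n]` such that each component `B_i` is empty or an
interval `{i+1, …, i+l}` with `l > 0`, and `j ∈ B_i` implies `B_j ⊆ B_i`. -/
theorem bracket_set_bijection (n : ℕ) :
    Set.BijOn (fun T => BTree.bracket T 0) {T : BTree | T.size = n}
      {B : Set (ℕ × ℕ) |
        (∀ p ∈ B, 1 ≤ p.1 ∧ p.1 < p.2 ∧ p.2 ≤ n) ∧
        (∀ i : ℕ, comp B i = ∅ ∨ ∃ l > 0, comp B i = Set.Ioc i (i + l)) ∧
        (∀ i j : ℕ, (i, j) ∈ B → comp B j ⊆ comp B i)} := by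
  refine ⟨?_, ?_, ?_⟩
  · -- MapsTo
    intro T hT
    simp only [Set.mem_setOf_eq] at hT ⊢
    refine ⟨?_, ?_, ?_⟩
    · intro p hp
      have := BTreeAux.bracket_bounds T 0 p hp
      omega
    · exact BTreeAux.comp_bracket T 0
    · exact BTreeAux.bracket_nested T 0
  · -- InjOn
    intro T hT T' hT' h
    exact BTreeAux.bracket_inj T T' 0 (by simp only [Set.mem_setOf_eq] at hT hT'; omega) h
  · -- SurjOn
    intro B hB
    simp only [Set.mem_setOf_eq] at hB
    obtain ⟨h1, h2, h3⟩ := hB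
    obtain ⟨T, hTs, hTb⟩ := BTreeAux.bracket_surj n 0 B
      (by intro p hp; have := h1 p hp; omega) h2 h3
    exact ⟨T, hTs, hTb⟩
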